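/- Let n ≥ 3, m ∈ ℕ with 2m < n, and let u : ℝⁿ₊ → [0,∞) be locally bounded with u(x) = ∫_{ℝⁿ₊} G⁺_{2m}(x,y) u_m(y) dy for some u_m ≥ 0, where G⁺_{2m}(x,y) = |x-y|^{-(n-2m)} - |x*-y|^{-(n-2m)}. Define the Kelvin transform ū(x) = |x|^{-(n-2m)} u(x/|x|²) for x ≠ 0. Then ū(x) = ∫_{ℝⁿ₊} G⁺_{2m}(x,z) ū_m(z) |z|^{-(2m+α)} dz, where ū_m(z) = |z|^{-(n-α)} u_m(z/|z|²) and 0 < α < 2. -/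

import Mathlib

open MeasureTheory
open EuclideanGeometry

noncomputable section

/-- The last coordinate of a point in `ℝⁿ`. -/
def lastCoord (n : ℕ) (x : EuclideanSpace ℝ (Fin n)) : ℝ :=
  if h : 0 < n then x ⟨n - 1, by omega⟩ else 0

/-- The upper half space `ℝⁿ₊ = {x : xₙ > 0}`. -/
def upperHalf (n : ℕ) : Set (EuclideanSpace ℝ (Fin n)) := {x | 0 < lastCoord n x}

/-- Reflection `x*` of `x` across `∂ℝⁿ₊` (the last coordinate is negated). -/
def reflLast (n : ℕ) (x : EuclideanSpace ℝ (Fin n)) : EuclideanSpace ℝ (Fin n) :=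
  WithLp.toLp 2 (fun i => if (i : ℕ) = n - 1 then -x i else x i)

/-- The Green's function `G⁺₂ₘ` of `(-Δ)^m` on the half space. -/
def G2m (n m : ℕ) (x y : EuclideanSpace ℝ (Fin n)) : ℝ :=
  ‖x - y‖ ^ (-((n : ℝ) - 2 * m)) - ‖reflLast n x - y‖ ^ (-((n : ℝ) - 2 * m))

section Helpers

variable {n : ℕ}

lemma inv_eq (z : EuclideanSpace ℝ (Fin n)) :
    EuclideanGeometry.inversion (0 : EuclideanSpace ℝ (Fin n)) 1 z = (‖z‖ ^ 2)⁻¹ • z := by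
  simp [EuclideanGeometry.inversion, dist_eq_norm, div_pow, inv_pow]

lemma lastCoord_smul (hn : 0 < n) (c : ℝ) (z : EuclideanSpace ℝ (Fin n)) :
    lastCoord n (c • z) = c * lastCoord n z := by
  simp [lastCoord, hn]

lemma lastCoord_zero : lastCoord n (0 : EuclideanSpace ℝ (Fin n)) = 0 := by
  unfold lastCoord; split <;> simp

lemma ne_zero_of_mem {z : EuclideanSpace ℝ (Fin n)} (hz : z ∈ upperHalf n) : z ≠ 0 := by
  rintro rfl
  simpa [upperHalf, lastCoord_zero] using hz

lemma norm_reflLast (x : EuclideanSpace ℝ (Fin n)) : ‖reflLast n x‖ = ‖x‖ := by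
  rw [EuclideanSpace.norm_eq, EuclideanSpace.norm_eq]
  congr 1
  refine Finset.sum_congr rfl fun i _ => ?_
  unfold reflLast
  by_cases h : (i : ℕ) = n - 1 <;> simp [h]

lemma reflLast_smul (c : ℝ) (x : EuclideanSpace ℝ (Fin n)) :
    reflLast n (c • x) = c • reflLast n x := by
  ext i
  unfold reflLast
  simp only [PiLp.smul_apply, smul_eq_mul]
  split <;> simp [*]

lemma norm_inv_sub {a b : EuclideanSpace ℝ (Fin n)} (ha : a ≠ 0) (hb : b ≠ 0) :
    ‖(‖a‖ ^ 2)⁻¹ • a - (‖b‖ ^ 2)⁻¹ • b‖ = ‖a - b‖ / (‖a‖ * ‖b‖) := by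
  have := EuclideanGeometry.dist_inversion_inversion (c := (0 : EuclideanSpace ℝ (Fin n)))
    ha hb 1
  rw [inv_eq, inv_eq, dist_eq_norm, dist_eq_norm, dist_eq_norm] at this
  simp only [sub_zero, one_pow] at this
  rw [this, dist_eq_norm]; ring



lemma G2m_kelvin (m : ℕ) {x z : EuclideanSpace ℝ (Fin n)} (hx : x ≠ 0) (hz : z ≠ 0) :
    G2m n m ((‖x‖ ^ 2)⁻¹ • x) ((‖z‖ ^ 2)⁻¹ • z) =
      (‖x‖ * ‖z‖) ^ ((n : ℝ) - 2 * m) * G2m n m x z := by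
  have hxz : (0 : ℝ) < ‖x‖ * ‖z‖ :=
    mul_pos (norm_pos_iff.2 hx) (norm_pos_iff.2 hz)
  have hrx : reflLast n x ≠ 0 := fun h => hx (by
    have := congrArg norm h
    rw [norm_reflLast] at this
    simpa using this)
  have key : ∀ a : ℝ, 0 ≤ a →
      (a / (‖x‖ * ‖z‖)) ^ (-((n : ℝ) - 2 * m)) =
        (‖x‖ * ‖z‖) ^ ((n : ℝ) - 2 * m) * a ^ (-((n : ℝ) - 2 * m)) := by
    intro a ha
    rw [Real.div_rpow ha hxz.le, Real.rpow_neg hxz.le]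
    field_simp
  unfold G2m
  rw [norm_inv_sub hx hz, reflLast_smul,
    show ((‖x‖ ^ 2)⁻¹ : ℝ) = (‖reflLast n x‖ ^ 2)⁻¹ by rw [norm_reflLast],
    norm_inv_sub hrx hz, norm_reflLast,
    key _ (norm_nonneg _), key _ (norm_nonneg _)]
  ring

lemma det_aux {z : EuclideanSpace ℝ (Fin n)} (hz : z ≠ 0) :
    |((((1 : ℝ) / dist z (0 : EuclideanSpace ℝ (Fin n))) ^ 2 •
        (Submodule.reflection (ℝ ∙ (z - 0))ᗮ :
          EuclideanSpace ℝ (Fin n) →L[ℝ] EuclideanSpace ℝ (Fin n))).det)| =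
      ((‖z‖ ^ 2)⁻¹) ^ n := by
  have h1 : (((1 : ℝ) / dist z (0 : EuclideanSpace ℝ (Fin n))) ^ 2 •
        (Submodule.reflection (ℝ ∙ (z - 0))ᗮ :
          EuclideanSpace ℝ (Fin n) →L[ℝ] EuclideanSpace ℝ (Fin n))).det =
      (((1 : ℝ) / ‖z‖) ^ 2) ^ (Module.finrank ℝ (EuclideanSpace ℝ (Fin n))) *
        LinearMap.det ((Submodule.reflection (ℝ ∙ (z - 0))ᗮ).toLinearMap) := by
    rw [ContinuousLinearMap.det, ContinuousLinearMap.coe_smul, LinearMap.det_smul,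
      dist_eq_norm, sub_zero]
    rfl
  rw [h1, Submodule.det_reflection, Submodule.orthogonal_orthogonal, sub_zero,
    finrank_span_singleton hz]
  rw [finrank_euclideanSpace, Fintype.card_fin]
  rw [abs_mul]
  simp [abs_of_nonneg, div_pow, inv_pow, abs_of_nonneg (by positivity : (0:ℝ) ≤ (‖z‖^2)⁻¹ ^ n)]


lemma measurableSet_upperHalf : MeasurableSet (upperHalf n) := by
  have hm : Measurable (lastCoord n) := by
    unfold lastCoord
    split
    · exact (measurable_pi_apply _).comp (WithLp.measurable_ofLp 2 _)
    · exact measurable_const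
  exact measurableSet_lt measurable_const hm

lemma mapsTo_inv (hn : 0 < n) {z : EuclideanSpace ℝ (Fin n)} (hz : z ∈ upperHalf n) :
    (‖z‖ ^ 2)⁻¹ • z ∈ upperHalf n := by
  have h1 : (0 : ℝ) < ‖z‖ := norm_pos_iff.2 (ne_zero_of_mem hz)
  have : 0 < lastCoord n z := hz
  simp only [upperHalf, Set.mem_setOf_eq, lastCoord_smul hn]
  positivity


end Helpers

/-- Kelvin transform of the half-space integral representation: if
`u(x) = ∫_{ℝⁿ₊} G⁺₂ₘ(x,y) uₘ(y) dy`, then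
`ū(x) = ∫_{ℝⁿ₊} G⁺₂ₘ(x,z) ūₘ(z) |z|^{-(2m+α)} dz`. -/
theorem kelvin_integral_identity (n m : ℕ) (hn : 3 ≤ n) (hm : 0 < m) (hmn : 2 * m < n)
    (α : ℝ) (hα : 0 < α) (hα2 : α < 2)
    (u um : EuclideanSpace ℝ (Fin n) → ℝ)
    (hu0 : ∀ y, 0 ≤ u y) (hum0 : ∀ y, 0 ≤ um y)
    (hloc : ∀ K : Set (EuclideanSpace ℝ (Fin n)), IsCompact K → ∃ C, ∀ x ∈ K, |u x| ≤ C)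
    (hrep : ∀ x ∈ upperHalf n, u x = ∫ y in upperHalf n, G2m n m x y * um y) :
    ∀ x ∈ upperHalf n, x ≠ 0 →
      ‖x‖ ^ (-((n : ℝ) - 2 * m)) * u ((‖x‖ ^ 2)⁻¹ • x) =
        ∫ z in upperHalf n,
          G2m n m x z * (‖z‖ ^ (-((n : ℝ) - α)) * um ((‖z‖ ^ 2)⁻¹ • z)) *
            ‖z‖ ^ (-(2 * (m : ℝ) + α)) := by
  intro x hx hx0
  have hn0 : 0 < n := by omega
  have hfun : ∀ z : EuclideanSpace ℝ (Fin n), EuclideanGeometry.inversion (0 : EuclideanSpace ℝ (Fin n)) 1 z = (‖z‖ ^ 2)⁻¹ • z := inv_eq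
  have hx' : (‖x‖ ^ 2)⁻¹ • x ∈ upperHalf n := mapsTo_inv hn0 hx
  -- image of the upper half space under inversion
  have hmaps : ∀ z ∈ upperHalf n, EuclideanGeometry.inversion (0 : EuclideanSpace ℝ (Fin n)) 1 z ∈ upperHalf n := by
    intro z hz; rw [hfun]; exact mapsTo_inv hn0 hz
  have himg : EuclideanGeometry.inversion (0 : EuclideanSpace ℝ (Fin n)) 1 '' upperHalf n = upperHalf n := by
    apply Set.Subset.antisymm
    · rintro _ ⟨z, hz, rfl⟩; exact hmaps z hz
    · intro z hz
      exact ⟨EuclideanGeometry.inversion (0 : EuclideanSpace ℝ (Fin n)) 1 z, hmaps z hz,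
        EuclideanGeometry.inversion_inversion 0 one_ne_zero z⟩
  have hinj : Set.InjOn (EuclideanGeometry.inversion (0 : EuclideanSpace ℝ (Fin n)) 1) (upperHalf n) := by
    intro a _ b _ h
    have := congrArg (EuclideanGeometry.inversion (0 : EuclideanSpace ℝ (Fin n)) 1) h
    rwa [EuclideanGeometry.inversion_inversion 0 one_ne_zero,
      EuclideanGeometry.inversion_inversion 0 one_ne_zero] at this
  -- change of variables
  have key : (∫ y in upperHalf n, G2m n m ((‖x‖ ^ 2)⁻¹ • x) y * um y) =
      ∫ z in upperHalf n,
        |((((1 : ℝ) / dist z (0 : EuclideanSpace ℝ (Fin n))) ^ 2 •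
            (Submodule.reflection (ℝ ∙ (z - 0))ᗮ : EuclideanSpace ℝ (Fin n) →L[ℝ] EuclideanSpace ℝ (Fin n))).det)| •
          (G2m n m ((‖x‖ ^ 2)⁻¹ • x) (EuclideanGeometry.inversion (0 : EuclideanSpace ℝ (Fin n)) 1 z) *
            um (EuclideanGeometry.inversion (0 : EuclideanSpace ℝ (Fin n)) 1 z)) := by
    conv_lhs => rw [← himg]
    exact integral_image_eq_integral_abs_det_fderiv_smul volume measurableSet_upperHalf
      (fun z hz => (EuclideanGeometry.hasFDerivAt_inversion
        (ne_zero_of_mem hz)).hasFDerivWithinAt)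
      hinj _
  rw [hrep _ hx', key, ← integral_const_mul]
  apply MeasureTheory.setIntegral_congr_fun measurableSet_upperHalf
  intro z hz
  have hz0 : z ≠ 0 := ne_zero_of_mem hz
  have ht : (0 : ℝ) < ‖z‖ := norm_pos_iff.2 hz0
  have hs : (0 : ℝ) < ‖x‖ := norm_pos_iff.2 hx0
  simp only [det_aux hz0, hfun, smul_eq_mul, G2m_kelvin m hx0 hz0]
  -- pure real computation
  have h2 : ((‖z‖ ^ 2)⁻¹ : ℝ) = ‖z‖ ^ (-2 : ℝ) := by
    rw [Real.rpow_neg ht.le, show ((2:ℝ)) = ((2:ℕ):ℝ) by norm_num, Real.rpow_natCast]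
  have h1 : ((‖z‖ ^ 2)⁻¹ : ℝ) ^ n = ‖z‖ ^ (-(2 * (n : ℝ))) := by
    rw [h2, ← Real.rpow_natCast (‖z‖ ^ (-2 : ℝ)) n, ← Real.rpow_mul ht.le]
    norm_num
  have e1 : ‖x‖ ^ (-((n : ℝ) - 2 * m)) * ‖x‖ ^ ((n : ℝ) - 2 * m) = 1 := by
    rw [← Real.rpow_add hs]; simp
  have e2 : ‖z‖ ^ ((n : ℝ) - 2 * m) * ‖z‖ ^ (-(2 * (n : ℝ))) =
      ‖z‖ ^ (-((n : ℝ) - α)) * ‖z‖ ^ (-(2 * (m : ℝ) + α)) := by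
    rw [← Real.rpow_add ht, ← Real.rpow_add ht]
    ring_nf
  rw [Real.mul_rpow hs.le ht.le, h1]
  calc ‖x‖ ^ (-((n : ℝ) - 2 * m)) *
        (‖z‖ ^ (-(2 * (n : ℝ))) *
          (‖x‖ ^ ((n : ℝ) - 2 * m) * ‖z‖ ^ ((n : ℝ) - 2 * m) * G2m n m x z *
            um ((‖z‖ ^ 2)⁻¹ • z)))
      = (‖x‖ ^ (-((n : ℝ) - 2 * m)) * ‖x‖ ^ ((n : ℝ) - 2 * m)) *
        (‖z‖ ^ ((n : ℝ) - 2 * m) * ‖z‖ ^ (-(2 * (n : ℝ)))) * G2m n m x z *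
          um ((‖z‖ ^ 2)⁻¹ • z) := by ring
    _ = _ := by rw [e1, e2]; ring

end
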